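/- Fix h₀ ∈ [0,1) and for r ∈ (0, r_{h₀}) let c(r) = (e^{-h₀²/2} − e^{-(h₀+r)²/2})/r, so that (h₀, h₀+r) is a good pair with respect to c(r). Then the function Θ(r) = ∫₀¹ r/√(−(t·r+h₀)² − 2 log(e^{−h₀²/2} − c(r)·t·r)) dt is increasing in r on (0, r_{h₀}). -/

import Mathlib

open Real

/-- A pair `(a, b)` is a good pair with respect to `c`. -/
def GoodPair (c a b : ℝ) : Prop :=
  a < b ∧ c * a + Real.exp (-a^2/2) = c * b + Real.exp (-b^2/2) ∧
    0 < c - a * Real.exp (-a^2/2) ∧ c - b * Real.exp (-b^2/2) ≤ 0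

/-- The integral `Θ(c, h₀, r)`. -/
noncomputable def Theta (c h₀ r : ℝ) : ℝ :=
  ∫ t in (0:ℝ)..1,
    r / Real.sqrt (-(t * r + h₀)^2 - 2 * Real.log (Real.exp (-h₀^2/2) - c * t * r))

open Set MeasureTheory



noncomputable def gg (x : ℝ) : ℝ := Real.exp (-x^2/2)
lemma gg_pos (x : ℝ) : 0 < gg x := Real.exp_pos _
lemma gg_deriv (x : ℝ) : HasDerivAt gg (-x * gg x) x := by
  have h1 : HasDerivAt (fun x : ℝ => -x^2/2) (-x) x := by
    have := ((hasDerivAt_pow 2 x).neg).div_const 2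
    simpa using this.congr_deriv (by ring)
  unfold gg; exact (h1.exp).congr_deriv (by ring)
lemma gg_cont : Continuous gg := by unfold gg; continuity
noncomputable def uu (x : ℝ) : ℝ := x * gg x
lemma uu_cont : Continuous uu := by unfold uu; exact continuous_id.mul gg_cont
lemma uu_deriv (x : ℝ) : HasDerivAt uu ((1 - x^2) * gg x) x := by
  unfold uu; exact ((hasDerivAt_id' x).mul (gg_deriv x)).congr_deriv (by ring)

lemma uu_mono : StrictMonoOn uu (Icc (0:ℝ) 1) := by
  apply strictMonoOn_of_deriv_pos (convex_Icc _ _)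
    (uu_cont.continuousOn)
  intro x hx
  rw [interior_Icc] at hx
  rw [(uu_deriv x).deriv]
  have h := gg_pos x
  have h1 : 0 < 1 - x^2 := by nlinarith [hx.1, hx.2]
  positivity

lemma uu_anti : StrictAntiOn uu (Ici (1:ℝ)) := by
  apply strictAntiOn_of_deriv_neg (convex_Ici _)
    (uu_cont.continuousOn)
  intro x hx
  rw [interior_Ici] at hx
  rw [(uu_deriv x).deriv]
  have := gg_pos x
  have hx1 : (1:ℝ) < x := hx
  have h1 : 1 - x^2 < 0 := by nlinarith
  nlinarith


lemma gp_facts (h₀ R : ℝ)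
    (hgp : ∀ r ∈ Ioo (0:ℝ) R,
      GoodPair ((Real.exp (-h₀^2/2) - Real.exp (-(h₀ + r)^2/2)) / r) h₀ (h₀ + r))
    (r : ℝ) (hr : r ∈ Ioo 0 R) :
    h₀ * gg h₀ < (gg h₀ - gg (h₀+r))/r ∧ (gg h₀ - gg (h₀+r))/r ≤ (h₀+r) * gg (h₀+r) := by
  obtain ⟨-, -, h3, h4⟩ := hgp r hr
  constructor <;> [skip; skip] <;> · simp only [gg]; linarith

/-- slope of gg over [x, y] equals uu at an interior point -/
lemma gg_slope (x y : ℝ) (hxy : x < y) :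
    ∃ ξ ∈ Ioo x y, (gg x - gg y)/(y - x) = uu ξ := by
  obtain ⟨ξ, hmem, hξ⟩ := exists_hasDerivAt_eq_slope gg (fun x => -x * gg x)
    hxy gg_cont.continuousOn (fun z _ => gg_deriv z)
  refine ⟨ξ, hmem, ?_⟩
  rw [show gg x - gg y = -(gg y - gg x) by ring, neg_div, ← hξ]
  unfold uu; ring

lemma stepA (h₀ R : ℝ) (hh₀ : 0 ≤ h₀) (hR : 0 < R)
    (hgp : ∀ r ∈ Ioo (0:ℝ) R,
      GoodPair ((Real.exp (-h₀^2/2) - Real.exp (-(h₀ + r)^2/2)) / r) h₀ (h₀ + r))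
    (r : ℝ) (hr : r ∈ Ioo 0 R) :
    (gg h₀ - gg (h₀+r))/r < (h₀+r) * gg (h₀+r) := by
  obtain ⟨hr0, hrR⟩ := hr
  obtain ⟨ξ, hξmem, hξ⟩ := gg_slope h₀ (h₀+r) (by linarith)
  rw [show h₀ + r - h₀ = r by ring] at hξ
  rw [hξ]
  by_cases hb1 : h₀ + r ≤ 1
  · exact uu_mono ⟨by linarith [hξmem.1], by linarith [hξmem.2]⟩
      ⟨by linarith, hb1⟩ hξmem.2
  · push_neg at hb1
    by_contra hcon
    push_neg at hcon  -- (h₀+r) * gg (h₀+r) ≤ uu ξ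
    have hcon' : (h₀+r) * gg (h₀+r) ≤ uu ξ := hcon
    set r' := (r + R)/2 with hr'def
    have hr'1 : r < r' := by simp [hr'def]; linarith
    have hr'R : r' < R := by simp [hr'def]; linarith
    have hr'0 : 0 < r' := by linarith
    obtain ⟨ζ, hζmem, hζ⟩ := gg_slope (h₀+r) (h₀+r') (by linarith)
    rw [show h₀ + r' - (h₀+r) = r' - r by ring] at hζ
    have h4' := (gp_facts h₀ R hgp r' ⟨hr'0, hr'R⟩).2
    have hζb : uu ζ < uu (h₀+r) := uu_anti (by simpa using hb1.le)
      (by simpa using (by linarith [hζmem.1] : (1:ℝ) ≤ ζ)) hζmem.1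
    have hζb' : uu (h₀+r') < uu ζ := uu_anti
      (by simpa using (by linarith [hζmem.1] : (1:ℝ) ≤ ζ))
      (by simpa using (by linarith [hb1, hr'1] : (1:ℝ) ≤ h₀ + r')) hζmem.2
    -- abbreviate
    have e1 : gg h₀ - gg (h₀+r) = (uu ξ) * r := by
      field_simp at hξ; linarith [hξ]
    have e2 : gg (h₀+r) - gg (h₀+r') = (uu ζ) * (r' - r) := by
      have : r' - r ≠ 0 := by linarith
      field_simp at hζ; linarith [hζ]
    have h4'' : gg h₀ - gg (h₀+r') ≤ uu (h₀+r') * r' := by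
      rw [div_le_iff₀ hr'0] at h4'
      unfold uu; linarith
    have hzx : uu ζ < uu ξ := lt_of_lt_of_le hζb (by unfold uu; unfold uu at hcon'; linarith)
    nlinarith [mul_pos (sub_pos.2 hζb') hr'0, mul_pos (sub_pos.2 hzx) hr0]

lemma chord (h₀ r c : ℝ) (hh₀ : 0 ≤ h₀) (hr : 0 < r)
    (hcr : c * r = gg h₀ - gg (h₀+r))
    (hc1 : h₀ * gg h₀ < c) (hc2 : c < (h₀+r) * gg (h₀+r)) :
    ∀ x ∈ Ioo h₀ (h₀+r), gg h₀ - c*(x - h₀) < gg x := by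
  intro x hx
  by_contra hcon
  push_neg at hcon  -- gg x ≤ gg h₀ - c*(x-h₀)
  set D : ℝ → ℝ := fun y => gg y - gg h₀ + c * (y - h₀) with hDdef
  have hDd : ∀ y : ℝ, HasDerivAt D (c - uu y) y := by
    intro y
    have : HasDerivAt D (-y * gg y + c * 1) y :=
      ((gg_deriv y).sub_const (gg h₀)).add (((hasDerivAt_id y).sub_const h₀).const_mul c)
    exact this.congr_deriv (by unfold uu; ring)
  have hDcont : Continuous D := by
    apply (gg_cont.sub continuous_const).add; continuity
  have hDx : D x ≤ 0 := by simp only [hDdef]; linarith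
  have hDb : D (h₀+r) = 0 := by simp only [hDdef]; linarith [hcr]
  obtain ⟨x1, hx1mem, hx1⟩ := exists_hasDerivAt_eq_slope D (fun y => c - uu y)
    hx.1 hDcont.continuousOn (fun z _ => hDd z)
  obtain ⟨x2, hx2mem, hx2⟩ := exists_hasDerivAt_eq_slope D (fun y => c - uu y)
    hx.2 hDcont.continuousOn (fun z _ => hDd z)
  have hD0 : D h₀ = 0 := by simp [hDdef]
  have hux1 : c ≤ uu x1 := by
    have : (D x - 0) / (x - h₀) ≤ 0 :=
      div_nonpos_of_nonpos_of_nonneg (by linarith) (by linarith [hx.1])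
    rw [hD0] at hx1
    rw [← hx1] at this
    linarith
  have hux2 : uu x2 ≤ c := by
    rw [hDb] at hx2
    have : 0 ≤ (0 - D x) / (h₀ + r - x) :=
      div_nonneg (by linarith) (by linarith [hx.2])
    rw [← hx2] at this
    linarith
  have hub : c < uu (h₀+r) := by unfold uu; exact hc2
  by_cases h1 : 1 ≤ x2
  · have : uu (h₀+r) < uu x2 := uu_anti h1 (by simp; linarith [hx2mem.2, hx.2]) (by linarith [hx2mem.2])
    linarith
  · push_neg at h1
    have : uu x1 < uu x2 := uu_mono ⟨by linarith [hx1mem.1], by linarith [hx1mem.2, hx2mem.1, h1]⟩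
      ⟨by linarith [hx2mem.1, hx.1, hx1mem.1], h1.le⟩ (by linarith [hx1mem.2, hx2mem.1])
    linarith

lemma omega_pos (h₀ r : ℝ) (t : ℝ) (ht : t ∈ Icc (0:ℝ) 1) :
    0 < gg h₀ - t*(gg h₀ - gg (h₀+r)) := by
  have h1 := gg_pos h₀
  have h2 := gg_pos (h₀+r)
  nlinarith [ht.1, ht.2, mul_nonneg (sub_nonneg.2 ht.2) h1.le, mul_nonneg ht.1 h2.le]

lemma eta_pos (h₀ r : ℝ) (hh₀ : 0 ≤ h₀) (hr : 0 < r)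
    (hc1 : h₀ * gg h₀ < (gg h₀ - gg (h₀+r))/r)
    (hc2 : (gg h₀ - gg (h₀+r))/r < (h₀+r) * gg (h₀+r)) :
    ∀ t ∈ Ioo (0:ℝ) 1, 0 < -(t*r+h₀)^2 - 2*Real.log (gg h₀ - t*(gg h₀ - gg (h₀+r))) := by
  intro t ht
  set c := (gg h₀ - gg (h₀+r))/r with hc
  have hcr : c * r = gg h₀ - gg (h₀+r) := by rw [hc, div_mul_cancel₀ _ hr.ne']
  have hx : h₀ + t*r ∈ Ioo h₀ (h₀+r) := by
    constructor <;> nlinarith [ht.1, ht.2]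
  have hch := chord h₀ r c hh₀ hr hcr hc1 hc2 (h₀ + t*r) hx
  have he : gg h₀ - c*(h₀ + t*r - h₀) = gg h₀ - t*(gg h₀ - gg (h₀+r)) := by
    rw [show h₀ + t*r - h₀ = t * r by ring]; rw [← hcr]; ring
  rw [he] at hch
  have hω := omega_pos h₀ r t ⟨ht.1.le, ht.2.le⟩
  have hlog : Real.log (gg h₀ - t*(gg h₀ - gg (h₀+r))) < Real.log (gg (h₀+t*r)) :=
    Real.log_lt_log hω hch
  rw [show gg (h₀+t*r) = Real.exp (-(h₀+t*r)^2/2) from rfl, Real.log_exp] at hlog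
  nlinarith [hlog]

lemma G_nonneg (h₀ r : ℝ) (hh₀ : 0 ≤ h₀) (hr : 0 < r)
    (hc1 : h₀ * gg h₀ < (gg h₀ - gg (h₀+r))/r) :
    ∀ t ∈ Icc (0:ℝ) 1,
      0 ≤ (gg h₀ - t*(gg h₀ - gg (h₀+r))) *
            (-h₀*(t*r+h₀) - 2*Real.log (gg h₀ - t*(gg h₀ - gg (h₀+r))))
          - r*t*(h₀+r)*gg (h₀+r) := by
  have hωp : ∀ t ∈ Icc (0:ℝ) 1, 0 < gg h₀ - t*(gg h₀ - gg (h₀+r)) := omega_pos h₀ r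
  set k := gg h₀ - gg (h₀+r) with hk
  have hk0 : 0 < k := by
    have h1 : 0 ≤ h₀ * gg h₀ := mul_nonneg hh₀ (gg_pos _).le
    have h2 : 0 < k / r := lt_of_le_of_lt h1 hc1
    rcases div_pos_iff.mp h2 with h | h
    · exact h.1
    · linarith [h.2, hr]
  have hkga : h₀ * gg h₀ * r < k := (lt_div_iff₀ hr).mp hc1
  set G : ℝ → ℝ := fun t => (gg h₀ - t*k) *
      (-h₀*(t*r+h₀) - 2*Real.log (gg h₀ - t*k)) - r*t*(h₀+r)*gg (h₀+r) with hG
  set G' : ℝ → ℝ := fun t => -k * (-h₀*(t*r+h₀) - 2*Real.log (gg h₀ - t*k))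
      + (gg h₀ - t*k) * (-(h₀*r)) + 2*k - r*(h₀+r)*gg (h₀+r) with hG'
  set G'' : ℝ → ℝ := fun t => 2*h₀*r*k - 2*k^2/(gg h₀ - t*k) with hG''
  have hωd : ∀ t : ℝ, HasDerivAt (fun t => gg h₀ - t*k) (-k) t := by
    intro t
    simpa using ((hasDerivAt_id t).mul_const k).const_sub (gg h₀)
  have hGd : ∀ t ∈ Ioo (0:ℝ) 1, HasDerivAt G (G' t) t := by
    intro t ht
    have hωt : gg h₀ - t*k ≠ 0 := (hωp t ⟨ht.1.le, ht.2.le⟩).ne'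
    have hlog : HasDerivAt (fun t => Real.log (gg h₀ - t*k)) (-k/(gg h₀ - t*k)) t :=
      (hωd t).log hωt
    have hA : HasDerivAt (fun t => -h₀*(t*r+h₀) - 2*Real.log (gg h₀ - t*k))
        (-h₀*r - 2*(-k/(gg h₀ - t*k))) t := by
      have h1 : HasDerivAt (fun t : ℝ => -h₀*(t*r+h₀)) (-h₀*r) t := by
        simpa using (((hasDerivAt_id t).mul_const r).add_const h₀).const_mul (-h₀)
      exact h1.sub (hlog.const_mul 2)
    have hC : HasDerivAt (fun t : ℝ => r*t*(h₀+r)*gg (h₀+r)) (r*(h₀+r)*gg (h₀+r)) t := by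
      have := (((hasDerivAt_id t).const_mul r).mul_const (h₀+r)).mul_const (gg (h₀+r))
      simpa using this.congr_deriv (by ring)
    have := ((hωd t).mul hA).sub hC
    apply this.congr_deriv
    rw [hG']
    have hinv : (gg h₀ - t*k) * (gg h₀ - t*k)⁻¹ = 1 := mul_inv_cancel₀ hωt
    linear_combination (2*k) * hinv
  have hG'd : ∀ t ∈ Ioo (0:ℝ) 1, HasDerivAt G' (G'' t) t := by
    intro t ht
    have hωt : gg h₀ - t*k ≠ 0 := (hωp t ⟨ht.1.le, ht.2.le⟩).ne'
    have hlog : HasDerivAt (fun t => Real.log (gg h₀ - t*k)) (-k/(gg h₀ - t*k)) t :=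
      (hωd t).log hωt
    have hA : HasDerivAt (fun t => -h₀*(t*r+h₀) - 2*Real.log (gg h₀ - t*k))
        (-h₀*r - 2*(-k/(gg h₀ - t*k))) t := by
      have h1 : HasDerivAt (fun t : ℝ => -h₀*(t*r+h₀)) (-h₀*r) t := by
        simpa using (((hasDerivAt_id t).mul_const r).add_const h₀).const_mul (-h₀)
      exact h1.sub (hlog.const_mul 2)
    have := (((hA.const_mul (-k)).add ((hωd t).mul_const (-(h₀*r)))).add_const (2*k)).sub_const
      (r*(h₀+r)*gg (h₀+r))
    apply this.congr_deriv
    rw [hG'']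
    field_simp
    ring
  have hGcont : ContinuousOn G (Icc (0:ℝ) 1) := by
    apply ContinuousOn.sub
    · apply ContinuousOn.mul
      · exact (continuous_const.sub (continuous_id.mul continuous_const)).continuousOn
      · apply ContinuousOn.sub
        · exact (continuous_const.mul (continuous_id.mul continuous_const |>.add
            continuous_const)).continuousOn
        · exact (ContinuousOn.log
            ((continuous_const.sub (continuous_id.mul continuous_const)).continuousOn)
            (fun t ht => (hωp t ht).ne')).const_smul (2:ℝ)
    · exact (((continuous_const.mul continuous_id).mul continuous_const).mul
        continuous_const).continuousOn
  have hconc : ConcaveOn ℝ (Icc (0:ℝ) 1) G := by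
    apply concaveOn_of_hasDerivWithinAt2_nonpos (convex_Icc _ _) hGcont
      (f' := G') (f'' := G'')
    · intro t ht
      rw [interior_Icc] at ht
      exact (hGd t ht).hasDerivWithinAt
    · intro t ht
      rw [interior_Icc] at ht
      exact (hG'd t ht).hasDerivWithinAt
    · intro t ht
      rw [interior_Icc] at ht
      have hωt := hωp t ⟨ht.1.le, ht.2.le⟩
      have hωle : gg h₀ - t*k ≤ gg h₀ := by nlinarith [ht.1, hk0]
      rw [hG'']
      rw [sub_nonpos, le_div_iff₀ hωt]
      nlinarith [mul_le_mul_of_nonneg_left hωle (mul_nonneg hh₀ hr.le), hkga, hk0,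
        mul_nonneg (mul_nonneg hh₀ hr.le) hk0.le]
  have hG0 : G 0 = 0 := by
    rw [hG]
    simp only [zero_mul, mul_zero, sub_zero, zero_add]
    rw [show gg h₀ = Real.exp (-h₀^2/2) from rfl, Real.log_exp]
    ring
  have hG1 : G 1 = 0 := by
    rw [hG]
    simp only
    rw [show gg h₀ - 1*k = gg (h₀+r) by rw [hk]; ring,
      show gg (h₀+r) = Real.exp (-(h₀+r)^2/2) from rfl, Real.log_exp]
    ring
  intro t ht
  have h2 := hconc.2 (left_mem_Icc.mpr zero_le_one) (right_mem_Icc.mpr zero_le_one)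
    (by linarith [ht.2] : (0:ℝ) ≤ 1 - t) ht.1 (by ring)
  simp only [smul_eq_mul, mul_zero, mul_one, zero_add, hG0, hG1] at h2
  calc (0:ℝ) = (1-t)*0 + t*0 := by ring
  _ ≤ G t := by rw [show (1-t)*(0:ℝ) + t*0 = 0 by ring]; simpa using h2

noncomputable def EE (h₀ r t : ℝ) : ℝ :=
  -(t*r+h₀)^2 - 2*Real.log (gg h₀ - t*(gg h₀ - gg (h₀+r)))

lemma nonneg_of_mul_left {c b : ℝ} (hc : 0 < c) (h : 0 ≤ c * b) : 0 ≤ b :=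
  not_lt.mp fun hb => absurd h (not_le.mpr (mul_neg_of_pos_of_neg hc hb))

lemma ggcomp_deriv (h₀ r : ℝ) : HasDerivAt (fun r => gg (h₀+r)) (-(h₀+r) * gg (h₀+r)) r := by
  have := (gg_deriv (h₀+r)).comp r ((hasDerivAt_id r).const_add h₀)
  exact this.congr_deriv (mul_one _)

lemma EE_deriv (h₀ t : ℝ) (ht : t ∈ Icc (0:ℝ) 1) (r : ℝ) :
    HasDerivAt (fun r => EE h₀ r t)
      (-2*t*(t*r+h₀) + 2*t*(h₀+r)*gg (h₀+r) / (gg h₀ - t*(gg h₀ - gg (h₀+r)))) r := by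
  have hω : (0:ℝ) < gg h₀ - t*(gg h₀ - gg (h₀+r)) := omega_pos h₀ r t ht
  have hωd : HasDerivAt (fun r => gg h₀ - t*(gg h₀ - gg (h₀+r)))
      (-t*((h₀+r) * gg (h₀+r))) r := by
    have h1 : HasDerivAt (fun r => gg h₀ - gg (h₀+r)) ((h₀+r) * gg (h₀+r)) r :=
      ((ggcomp_deriv h₀ r).const_sub (gg h₀)).congr_deriv (by ring)
    simpa using (h1.const_mul t).const_sub (gg h₀) |>.congr_deriv (by ring)
  have hlog := hωd.log hω.ne'
  have hsq : HasDerivAt (fun r : ℝ => -(t*r+h₀)^2) (-2*t*(t*r+h₀)) r := by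
    have h1 : HasDerivAt (fun r : ℝ => t*r+h₀) t r := by
      simpa using ((hasDerivAt_id r).const_mul t).add_const h₀
    have := (h1.fun_pow 2).fun_neg
    simpa using this.congr_deriv (by ring)
  have := hsq.sub (hlog.const_mul 2)
  apply this.congr_deriv
  field_simp
  ring

lemma stepD (h₀ R : ℝ) (hh₀ : 0 ≤ h₀)
    (hfacts : ∀ r ∈ Ioo (0:ℝ) R, h₀*gg h₀ < (gg h₀ - gg (h₀+r))/r
      ∧ (gg h₀ - gg (h₀+r))/r < (h₀+r)*gg (h₀+r))
    (t : ℝ) (ht : t ∈ Ioo (0:ℝ) 1)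
    (r1 r2 : ℝ) (h1 : r1 ∈ Ioo (0:ℝ) R) (h2 : r2 ∈ Ioo (0:ℝ) R) (h12 : r1 ≤ r2) :
    r1 / Real.sqrt (EE h₀ r1 t) ≤ r2 / Real.sqrt (EE h₀ r2 t) := by
  have htI : t ∈ Icc (0:ℝ) 1 := ⟨ht.1.le, ht.2.le⟩
  have hEpos : ∀ r ∈ Ioo (0:ℝ) R, 0 < EE h₀ r t := fun r hr =>
    eta_pos h₀ r hh₀ hr.1 (hfacts r hr).1 (hfacts r hr).2 t ht
  rcases eq_or_lt_of_le h12 with rfl | hlt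
  · exact le_refl _
  have hsub : Icc r1 r2 ⊆ Ioo (0:ℝ) R := fun ρ hρ => ⟨lt_of_lt_of_le h1.1 hρ.1,
    lt_of_le_of_lt hρ.2 h2.2⟩
  set Φ : ℝ → ℝ := fun r => r^2 / EE h₀ r t with hΦ
  have hΦd : ∀ ρ ∈ Ioo (0:ℝ) R, HasDerivAt Φ
      ((2*ρ * EE h₀ ρ t - ρ^2 * (-2*t*(t*ρ+h₀) + 2*t*(h₀+ρ)*gg (h₀+ρ)
          / (gg h₀ - t*(gg h₀ - gg (h₀+ρ))))) / (EE h₀ ρ t)^2) ρ := by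
    intro ρ hρ
    have h := (hasDerivAt_pow 2 ρ).div (EE_deriv h₀ t htI ρ) (hEpos ρ hρ).ne'
    apply h.congr_deriv
    simp
  have hmono : MonotoneOn Φ (Icc r1 r2) := by
    apply monotoneOn_of_hasDerivWithinAt_nonneg (convex_Icc _ _)
      (fun ρ hρ => ((hΦd ρ (hsub hρ)).continuousAt.continuousWithinAt))
      (f' := fun ρ => (2*ρ * EE h₀ ρ t - ρ^2 * (-2*t*(t*ρ+h₀) + 2*t*(h₀+ρ)*gg (h₀+ρ)
          / (gg h₀ - t*(gg h₀ - gg (h₀+ρ))))) / (EE h₀ ρ t)^2)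
    · intro ρ hρ
      rw [interior_Icc] at hρ
      exact (hΦd ρ (hsub (Ioo_subset_Icc_self hρ))).hasDerivWithinAt
    · intro ρ hρ
      rw [interior_Icc] at hρ
      have hρ' := hsub (Ioo_subset_Icc_self hρ)
      have hω : (0:ℝ) < gg h₀ - t*(gg h₀ - gg (h₀+ρ)) := omega_pos h₀ ρ t htI
      have hGn := G_nonneg h₀ ρ hh₀ hρ'.1 (hfacts ρ hρ').1 t htI
      apply div_nonneg _ (sq_nonneg _)
      apply nonneg_of_mul_left hω
      have hiden : (gg h₀ - t*(gg h₀ - gg (h₀+ρ))) *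
          (2*ρ * EE h₀ ρ t - ρ^2 * (-2*t*(t*ρ+h₀) + 2*t*(h₀+ρ)*gg (h₀+ρ)
            / (gg h₀ - t*(gg h₀ - gg (h₀+ρ)))))
          = 2*ρ * ((gg h₀ - t*(gg h₀ - gg (h₀+ρ))) *
            (-h₀*(t*ρ+h₀) - 2*Real.log (gg h₀ - t*(gg h₀ - gg (h₀+ρ))))
            - ρ*t*(h₀+ρ)*gg (h₀+ρ)) := by
        rw [show EE h₀ ρ t = -(t*ρ+h₀)^2 - 2*Real.log (gg h₀ - t*(gg h₀ - gg (h₀+ρ))) from rfl]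
        field_simp
        ring
      rw [hiden]
      exact mul_nonneg (by linarith [hρ'.1]) hGn
  have hkey : Φ r1 ≤ Φ r2 := hmono (left_mem_Icc.mpr h12) (right_mem_Icc.mpr h12) h12
  have hE1 := hEpos r1 h1
  have hE2 := hEpos r2 h2
  have e1 : Real.sqrt (Φ r1) = r1 / Real.sqrt (EE h₀ r1 t) := by
    rw [hΦ]
    rw [Real.sqrt_div (sq_nonneg r1), Real.sqrt_sq h1.1.le]
  have e2 : Real.sqrt (Φ r2) = r2 / Real.sqrt (EE h₀ r2 t) := by
    rw [hΦ]
    rw [Real.sqrt_div (sq_nonneg r2), Real.sqrt_sq h2.1.le]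
  rw [← e1, ← e2]
  exact Real.sqrt_le_sqrt hkey

set_option maxHeartbeats 1000000 in
lemma integrableE (h₀ R : ℝ) (hh₀ : 0 ≤ h₀) (r : ℝ) (hr : r ∈ Ioo (0:ℝ) R)
    (hc1 : h₀*gg h₀ < (gg h₀ - gg (h₀+r))/r)
    (hc2 : (gg h₀ - gg (h₀+r))/r < (h₀+r)*gg (h₀+r)) :
    IntervalIntegrable (fun t => r / Real.sqrt (EE h₀ r t)) volume 0 1 := by
  obtain ⟨hr0, hrR⟩ := hr
  have hgap := gg_pos h₀
  have hgbp := gg_pos (h₀+r)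
  set ga := gg h₀
  set gb := gg (h₀+r)
  set k := ga - gb with hk
  have hk0 : 0 < k := by
    have h1 : 0 ≤ h₀ * ga := mul_nonneg hh₀ hgap.le
    have h2 : 0 < k / r := lt_of_le_of_lt h1 hc1
    rcases div_pos_iff.mp h2 with h | h
    · exact h.1
    · linarith [h.2]
  have hkA : h₀ * ga * r < k := by
    have := (lt_div_iff₀ hr0).mp hc1; linarith
  have hkB : k < (h₀+r) * gb * r := by
    have := (div_lt_iff₀ hr0).mp hc2; linarith
  have hT : 1 < ga / k := by
    rw [lt_div_iff₀ hk0]; simp [hk]; linarith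
  have hωpos : ∀ t : ℝ, t < ga/k → 0 < ga - t*k := by
    intro t ht
    have := (lt_div_iff₀ hk0).mp ht
    linarith
  set η : ℝ → ℝ := fun t => -(t*r+h₀)^2 - 2*Real.log (ga - t*k) with hη
  have hEEeq : ∀ t : ℝ, EE h₀ r t = η t := by
    intro t; rfl
  set η' : ℝ → ℝ := fun t => -2*r*(t*r+h₀) + 2*k/(ga - t*k) with hη'
  have hηd : ∀ t ∈ Iio (ga/k), HasDerivAt η (η' t) t := by
    intro t ht
    have hω := hωpos t ht
    have hωd : HasDerivAt (fun t : ℝ => ga - t*k) (-k) t := by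
      simpa using ((hasDerivAt_id t).mul_const k).const_sub ga
    have hlog := (hωd.log hω.ne').const_mul (2:ℝ)
    have hsq : HasDerivAt (fun t : ℝ => -(t*r+h₀)^2) (-2*r*(t*r+h₀)) t := by
      have h1 : HasDerivAt (fun t : ℝ => t*r+h₀) r t := by
        simpa using ((hasDerivAt_id t).mul_const r).add_const h₀
      simpa using ((h1.fun_pow 2).fun_neg).congr_deriv (by ring)
    have := hsq.sub hlog
    apply this.congr_deriv
    simp only [hη']
    ring
  -- χ = η' + 2r²t is monotone on Iio (ga/k)
  set χ : ℝ → ℝ := fun t => η' t + 2*r^2*t with hχ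
  have hχmono : MonotoneOn χ (Iio (ga/k)) := by
    apply monotoneOn_of_hasDerivWithinAt_nonneg (convex_Iio _)
      (f' := fun t => 2*k^2/(ga - t*k)^2)
    · -- continuity
      apply ContinuousOn.add
      · apply ContinuousOn.add
        · exact (continuous_const.mul (continuous_id.mul continuous_const |>.add
            continuous_const)).continuousOn
        · apply ContinuousOn.div continuousOn_const
            (continuous_const.sub (continuous_id.mul continuous_const)).continuousOn
          exact fun t ht => (hωpos t ht).ne'
      · exact (continuous_const.mul continuous_id).continuousOn
    · intro t ht
      rw [interior_Iio] at ht
      have hω := hωpos t ht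
      have hωd : HasDerivAt (fun t : ℝ => ga - t*k) (-k) t := by
        simpa using ((hasDerivAt_id t).mul_const k).const_sub ga
      have hinv : HasDerivAt (fun t : ℝ => 2*k/(ga - t*k))
          ((0*(ga-t*k) - 2*k*(-k))/(ga-t*k)^2) t :=
        (hasDerivAt_const t (2*k)).div hωd hω.ne'
      have h1 : HasDerivAt (fun t : ℝ => -2*r*(t*r+h₀)) (-2*r*r) t := by
        simpa using (((hasDerivAt_id t).mul_const r).add_const h₀).const_mul (-2*r)
      have h2 : HasDerivAt (fun t : ℝ => 2*r^2*t) (2*r^2) t := by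
        simpa using (hasDerivAt_id t).const_mul (2*r^2)
      have := (h1.add hinv).add h2
      refine (this.congr_deriv ?_).hasDerivWithinAt
      field_simp
      ring
    · intro t ht
      positivity
  have hχ0 : χ 0 = -2*r*h₀ + 2*k/ga := by simp [hχ, hη']
  have hχ1 : χ 1 = -2*r*(r+h₀) + 2*k/(ga-k) + 2*r^2 := by simp [hχ, hη']
  set A : ℝ := -2*r*h₀ + 2*k/ga with hA
  set B : ℝ := 2*r*(r+h₀) - 2*k/gb with hB
  have hA0 : 0 < A := by
    have h := (lt_div_iff₀ hgap).mpr (show h₀*r*ga < k by nlinarith [hkA])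
    rw [hA, mul_div_assoc]
    linarith
  have hB0 : 0 < B := by
    have h := (div_lt_iff₀ hgbp).mpr (show k < r*(r+h₀)*gb by nlinarith [hkB])
    rw [hB, mul_div_assoc]
    linarith
  have hχ0A : χ 0 = A := by rw [hχ0, hA]
  have hχ1B : χ 1 = -B + 2*r^2 := by
    rw [hχ1, hB, show ga - k = gb by rw [hk]; ring]
    ring
  have hη0 : η 0 = 0 := by
    simp only [hη]
    rw [show ga - 0*k = Real.exp (-h₀^2/2) by simp [ga, gg], Real.log_exp]
    ring
  have hη1 : η 1 = 0 := by
    simp only [hη]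
    rw [show ga - 1*k = Real.exp (-(h₀+r)^2/2) by rw [hk]; simp [ga, gb, gg], Real.log_exp]
    ring
  clear_value A B
  set δ : ℝ := min (1/2) (min (A/(2*r^2)) (B/(2*r^2))) with hδ
  have hδ0 : 0 < δ := lt_min (by norm_num) (lt_min (by positivity) (by positivity))
  have hδh : δ ≤ 1/2 := min_le_left _ _
  have hδA : δ ≤ A/(2*r^2) := le_trans (min_le_right _ _) (min_le_left _ _)
  have hδB : δ ≤ B/(2*r^2) := le_trans (min_le_right _ _) (min_le_right _ _)
  clear_value δ
  have hsub1 : Icc (0:ℝ) δ ⊆ Iio (ga/k) := fun s hs => lt_of_le_of_lt hs.2 (by linarith)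
  have hsub2 : Icc (1-δ) (1:ℝ) ⊆ Iio (ga/k) := fun s hs => lt_of_le_of_lt hs.2 (by linarith)
  have hmem0 : (0:ℝ) ∈ Iio (ga/k) := by simp; linarith
  have hmem1 : (1:ℝ) ∈ Iio (ga/k) := by simp; linarith
  -- left bound
  have hleft : ∀ t ∈ Icc (0:ℝ) δ, A*t - r^2*t^2 ≤ η t := by
    intro t htm
    set ψ : ℝ → ℝ := fun s => η s - A*s + r^2*s^2 with hψ
    have hψd : ∀ s ∈ Icc (0:ℝ) δ, HasDerivAt ψ (η' s - A + 2*r^2*s) s := by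
      intro s hs
      have hd := ((hηd s (hsub1 hs)).sub ((hasDerivAt_id s).const_mul A)).add
        ((hasDerivAt_pow 2 s).const_mul (r^2))
      exact hd.congr_deriv (by simp; ring)
    have hψmono : MonotoneOn ψ (Icc 0 δ) := by
      apply monotoneOn_of_hasDerivWithinAt_nonneg (convex_Icc _ _)
        (fun s hs => (hψd s hs).continuousAt.continuousWithinAt)
        (f' := fun s => η' s - A + 2*r^2*s)
      · intro s hs
        rw [interior_Icc] at hs
        exact (hψd s (Ioo_subset_Icc_self hs)).hasDerivWithinAt
      · intro s hs
        rw [interior_Icc] at hs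
        have h1 : χ 0 ≤ χ s := hχmono hmem0 (hsub1 (Ioo_subset_Icc_self hs)) hs.1.le
        rw [hχ0A] at h1
        simp only [hχ] at h1
        linarith
    have h2 := hψmono (left_mem_Icc.mpr (by linarith)) htm htm.1
    simp only [hψ] at h2
    linarith [h2, hη0]
  have hleft' : ∀ t ∈ Ioc (0:ℝ) δ, (A/2)*t ≤ η t := by
    intro t htm
    have h := hleft t ⟨htm.1.le, htm.2⟩
    have h2 : r^2*t ≤ A/2 := by
      have h3 : t ≤ A/(2*r^2) := le_trans htm.2 hδA
      have h4 : r^2*t ≤ r^2*(A/(2*r^2)) := mul_le_mul_of_nonneg_left h3 (by positivity)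
      have h5 : r^2*(A/(2*r^2)) = A/2 := by field_simp
      linarith
    have h6 : r^2*t^2 ≤ A/2*t := by
      calc r^2*t^2 = r^2*t*t := by ring
      _ ≤ A/2*t := mul_le_mul_of_nonneg_right h2 htm.1.le
    calc (A/2)*t = A*t - A/2*t := by ring
    _ ≤ A*t - r^2*t^2 := by linarith only [h6]
    _ ≤ η t := h
  -- right bound
  have hright : ∀ t ∈ Icc (1-δ) (1:ℝ), B*(1-t) - r^2*(1-t)^2 ≤ η t := by
    intro t htm
    set ψ : ℝ → ℝ := fun s => η s - B*(1-s) + r^2*(1-s)^2 with hψ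
    have hψd : ∀ s ∈ Icc (1-δ) (1:ℝ), HasDerivAt ψ (η' s + B - 2*r^2*(1-s)) s := by
      intro s hs
      have hb1 : HasDerivAt (fun s : ℝ => B*(1-s)) (-B) s := by
        simpa using (((hasDerivAt_id s).const_sub 1).const_mul B).congr_deriv (by ring)
      have hb2 : HasDerivAt (fun s : ℝ => r^2*(1-s)^2) (-2*r^2*(1-s)) s := by
        have := (((hasDerivAt_id s).const_sub 1).pow 2).const_mul (r^2)
        exact this.congr_deriv (by simp; ring)
      have hd := ((hηd s (hsub2 hs)).sub hb1).add hb2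
      exact hd.congr_deriv (by ring)
    have hψanti : AntitoneOn ψ (Icc (1-δ) 1) := by
      apply antitoneOn_of_hasDerivWithinAt_nonpos (convex_Icc _ _)
        (fun s hs => (hψd s hs).continuousAt.continuousWithinAt)
        (f' := fun s => η' s + B - 2*r^2*(1-s))
      · intro s hs
        rw [interior_Icc] at hs
        exact (hψd s (Ioo_subset_Icc_self hs)).hasDerivWithinAt
      · intro s hs
        rw [interior_Icc] at hs
        have h1 : χ s ≤ χ 1 := hχmono (hsub2 (Ioo_subset_Icc_self hs)) hmem1 hs.2.le
        rw [hχ1B] at h1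
        simp only [hχ] at h1
        linarith
    have h2 := hψanti htm (right_mem_Icc.mpr (by linarith)) htm.2
    simp only [hψ] at h2
    linarith [h2, hη1]
  have hright' : ∀ t ∈ Ico (1-δ) (1:ℝ), (B/2)*(1-t) ≤ η t := by
    intro t htm
    have h := hright t ⟨htm.1, htm.2.le⟩
    have h2 : r^2*(1-t) ≤ B/2 := by
      have h3 : 1-t ≤ B/(2*r^2) := by linarith [htm.1, hδB]
      have h4 : r^2*(1-t) ≤ r^2*(B/(2*r^2)) := mul_le_mul_of_nonneg_left h3 (by positivity)
      have h5 : r^2*(B/(2*r^2)) = B/2 := by field_simp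
      linarith
    have h6 : r^2*(1-t)^2 ≤ B/2*(1-t) := by
      calc r^2*(1-t)^2 = r^2*(1-t)*(1-t) := by ring
      _ ≤ B/2*(1-t) := mul_le_mul_of_nonneg_right h2 (by linarith [htm.2])
    calc (B/2)*(1-t) = B*(1-t) - B/2*(1-t) := by ring
    _ ≤ B*(1-t) - r^2*(1-t)^2 := by linarith only [h6]
    _ ≤ η t := h
  -- middle minimum
  have hmidne : (Icc δ (1-δ)).Nonempty := ⟨δ, le_refl _, by linarith⟩
  have hcontm : ContinuousOn η (Icc δ (1-δ)) := fun s hs =>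
    (hηd s (show s ∈ Iio (ga/k) by simp; linarith [hs.2])).continuousAt.continuousWithinAt
  obtain ⟨t₀, ht₀, hmin⟩ := isCompact_Icc.exists_isMinOn hmidne hcontm
  have hm0 : 0 < η t₀ := by
    have h := eta_pos h₀ r hh₀ hr0 hc1 hc2 t₀ ⟨by linarith [ht₀.1], by linarith [ht₀.2]⟩
    simp only [hη]
    rw [hk]
    exact h
  -- the bounding function
  set C1 : ℝ := r / Real.sqrt (A/2) with hC1
  set C2 : ℝ := r / Real.sqrt (B/2) with hC2
  set C3 : ℝ := r / Real.sqrt (η t₀) with hC3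
  have hC1n : 0 ≤ C1 := by positivity
  have hC2n : 0 ≤ C2 := by positivity
  have hC3n : 0 ≤ C3 := by positivity
  set bd : ℝ → ℝ := fun t => C1 * t^(-(1/2):ℝ) + C2 * (1-t)^(-(1/2):ℝ) + C3 with hbd
  have i1 : IntervalIntegrable (fun t : ℝ => t^(-(1/2):ℝ)) volume 0 1 :=
    intervalIntegral.intervalIntegrable_rpow' (by norm_num)
  have i2 : IntervalIntegrable (fun t : ℝ => (1-t)^(-(1/2):ℝ)) volume 0 1 := by
    have h := (intervalIntegral.intervalIntegrable_rpow'
      (show (-1:ℝ) < -(1/2) by norm_num) (a := 0) (b := 1)).comp_sub_left 1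
    simpa using h.symm
  have ibd : IntervalIntegrable bd volume 0 1 :=
    ((i1.const_mul C1).add (i2.const_mul C2)).add intervalIntegrable_const
  have hfm : AEStronglyMeasurable (fun t => r / Real.sqrt (EE h₀ r t))
      (volume.restrict (Set.uIoc (0:ℝ) 1)) := by
    apply Measurable.aestronglyMeasurable
    apply Measurable.div measurable_const
    apply Real.continuous_sqrt.measurable.comp
    apply Measurable.sub
    · fun_prop
    · apply Measurable.const_mul
      apply Real.measurable_log.comp
      fun_prop
  apply ibd.mono_fun' hfm
  rw [uIoc_of_le (zero_le_one)]
  filter_upwards [ae_restrict_mem measurableSet_Ioc] with t htm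
  -- pointwise bound
  have hft : (0:ℝ) ≤ r / Real.sqrt (EE h₀ r t) := div_nonneg hr0.le (Real.sqrt_nonneg _)
  rw [Real.norm_eq_abs, abs_of_nonneg hft, hEEeq]
  have hrp1 : (0:ℝ) ≤ t^(-(1/2):ℝ) := Real.rpow_nonneg htm.1.le _
  have hrp2 : (0:ℝ) ≤ (1-t)^(-(1/2):ℝ) := Real.rpow_nonneg (by linarith [htm.2]) _
  rcases eq_or_lt_of_le htm.2 with h1 | h1
  · -- t = 1
    rw [h1, hη1]
    simp only [Real.sqrt_zero, div_zero, hbd]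
    have b1 : (0:ℝ) ≤ C1 * (1:ℝ)^(-(1/2):ℝ) := mul_nonneg hC1n (Real.rpow_nonneg zero_le_one _)
    have b2 : (0:ℝ) ≤ C2 * (1-(1:ℝ))^(-(1/2):ℝ) := mul_nonneg hC2n (Real.rpow_nonneg (by norm_num) _)
    linarith [hC3n, b1, b2]
  by_cases hcase1 : t ≤ δ
  · -- left region
    have hb := hleft' t ⟨htm.1, hcase1⟩
    have hpos : 0 < (A/2)*t := mul_pos (by linarith) htm.1
    have key : r / Real.sqrt (η t) ≤ C1 * t^(-(1/2):ℝ) := by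
      have h2 : Real.sqrt ((A/2)*t) ≤ Real.sqrt (η t) := Real.sqrt_le_sqrt hb
      have h3 : 0 < Real.sqrt ((A/2)*t) := Real.sqrt_pos.mpr hpos
      have h4 := div_le_div_of_nonneg_left hr0.le h3 h2
      have h5 : r / Real.sqrt ((A/2)*t) = C1 * t^(-(1/2):ℝ) := by
        rw [Real.sqrt_mul (by positivity) t, hC1]
        rw [Real.rpow_neg htm.1.le, ← Real.sqrt_eq_rpow]
        field_simp
      linarith
    simp only [hbd]
    nlinarith [mul_nonneg hC2n hrp2, hC3n]
  push_neg at hcase1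
  by_cases hcase2 : 1-δ ≤ t
  · -- right region
    have hb := hright' t ⟨hcase2, h1⟩
    have hpos : 0 < (B/2)*(1-t) := mul_pos (by linarith) (by linarith)
    have key : r / Real.sqrt (η t) ≤ C2 * (1-t)^(-(1/2):ℝ) := by
      have h2 : Real.sqrt ((B/2)*(1-t)) ≤ Real.sqrt (η t) := Real.sqrt_le_sqrt hb
      have h3 : 0 < Real.sqrt ((B/2)*(1-t)) := Real.sqrt_pos.mpr hpos
      have h4 := div_le_div_of_nonneg_left hr0.le h3 h2
      have h5 : r / Real.sqrt ((B/2)*(1-t)) = C2 * (1-t)^(-(1/2):ℝ) := by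
        rw [Real.sqrt_mul (by positivity) (1-t), hC2]
        rw [Real.rpow_neg (by linarith), ← Real.sqrt_eq_rpow]
        field_simp
      linarith
    simp only [hbd]
    nlinarith [mul_nonneg hC1n hrp1, hC3n]
  push_neg at hcase2
  -- middle region
  have hb : η t₀ ≤ η t := hmin ⟨hcase1.le, by linarith⟩
  have key : r / Real.sqrt (η t) ≤ C3 := by
    have h2 : Real.sqrt (η t₀) ≤ Real.sqrt (η t) := Real.sqrt_le_sqrt hb
    have h3 : 0 < Real.sqrt (η t₀) := Real.sqrt_pos.mpr hm0
    have h4 := div_le_div_of_nonneg_left hr0.le h3 h2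
    rw [hC3]
    linarith
  simp only [hbd]
  nlinarith [mul_nonneg hC1n hrp1, mul_nonneg hC2n hrp2]


lemma EE_zero (h₀ r : ℝ) : EE h₀ r 0 = 0 := by
  unfold EE gg
  simp [Real.log_exp]
  ring

lemma EE_one (h₀ r : ℝ) : EE h₀ r 1 = 0 := by
  unfold EE
  rw [show gg h₀ - 1*(gg h₀ - gg (h₀+r)) = gg (h₀+r) by ring]
  unfold gg
  rw [Real.log_exp]
  ring


theorem stmt16 (h₀ : ℝ) (hh₀ : h₀ ∈ Set.Ico (0:ℝ) 1) (R : ℝ) (hR : 0 < R)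
    (hgp : ∀ r ∈ Set.Ioo (0:ℝ) R,
      GoodPair ((Real.exp (-h₀^2/2) - Real.exp (-(h₀ + r)^2/2)) / r) h₀ (h₀ + r)) :
    MonotoneOn
      (fun r => Theta ((Real.exp (-h₀^2/2) - Real.exp (-(h₀ + r)^2/2)) / r) h₀ r)
      (Set.Ioo (0:ℝ) R) := by
  have hh0 : 0 ≤ h₀ := hh₀.1
  have hfacts : ∀ r ∈ Set.Ioo (0:ℝ) R, h₀*gg h₀ < (gg h₀ - gg (h₀+r))/r
      ∧ (gg h₀ - gg (h₀+r))/r < (h₀+r)*gg (h₀+r) := fun r hr =>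
    ⟨(gp_facts h₀ R hgp r hr).1, stepA h₀ R hh0 hR hgp r hr⟩
  have hTheta : ∀ r ∈ Set.Ioo (0:ℝ) R,
      Theta ((Real.exp (-h₀^2/2) - Real.exp (-(h₀ + r)^2/2)) / r) h₀ r
        = ∫ t in (0:ℝ)..1, r / Real.sqrt (EE h₀ r t) := by
    intro r hr
    unfold Theta
    apply intervalIntegral.integral_congr
    intro t ht
    have hrne : r ≠ 0 := ne_of_gt hr.1
    have harg : (Real.exp (-h₀^2/2) - Real.exp (-(h₀ + r)^2/2)) / r * t * r
        = t*(Real.exp (-h₀^2/2) - Real.exp (-(h₀ + r)^2/2)) := by field_simp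
    show r / Real.sqrt (-(t*r+h₀)^2 - 2*Real.log (Real.exp (-h₀^2/2)
        - (Real.exp (-h₀^2/2) - Real.exp (-(h₀+r)^2/2))/r*t*r)) = r / Real.sqrt (EE h₀ r t)
    rw [harg]
    rfl
  intro r1 h1 r2 h2 h12
  simp only
  rw [hTheta r1 h1, hTheta r2 h2]
  apply intervalIntegral.integral_mono_on zero_le_one
    (integrableE h₀ R hh0 r1 h1 (hfacts r1 h1).1 (hfacts r1 h1).2)
    (integrableE h₀ R hh0 r2 h2 (hfacts r2 h2).1 (hfacts r2 h2).2)
  intro t ht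
  rcases eq_or_lt_of_le ht.1 with h0 | h0
  · rw [← h0, EE_zero h₀ r1, EE_zero h₀ r2]
    simp
  rcases eq_or_lt_of_le ht.2 with h1' | h1'
  · rw [h1', EE_one h₀ r1, EE_one h₀ r2]
    simp
  exact stepD h₀ R hh0 hfacts t ⟨h0, h1'⟩ r1 r2 h1 h2 h12
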